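/- arXiv:2203.05302 — 2 statements merged into one kernel-verified Lean document; each statement's English description precedes it below -/
import Mathlib

section
/- Let A₂ > 0, T > 0, and let u : ℝ × (0,T) → ℝ be three times continuously differentiable in x and once in t, with m := u − u_{xx} > 0 everywhere and satisfying the mCH equation m_t + ((u² − u_x²)·m)_x = 0. Assume for every t ∈ (0,T): m(·,t) − A₂ is integrable on (x, ∞) for every x, ∂_t ∫_x^∞ (m(ξ,t) − A₂) dξ = ∫_x^∞ m_t(ξ,t) dξ, and ((u² − u_x²)·m)(ξ,t) → A₂³ as ξ → +∞. Define y(x,t) := x − (1/A₂)·∫_x^∞ (m(ξ,t) − A₂) dξ − A₂²·t, and suppose X : ℝ × (0,T) → ℝ is continuously differentiable, with continuous mixed second partial ∂_t∂_y X, and satisfies y(X(y,t), t) = y for all (y,t). Then: (i) ∂_y X(y,t) = A₂ / m(X(y,t), t); (ii) ∂_t X(y,t) = (u² − u_x²)(X(y,t), t); (iii) ∂_t ∂_y X(y,t) = 2A₂·u_x(X(y,t), t); and (iv) setting â₁(y,t) := exp(−(1/(2A₂))·∫_{X(y,t)}^∞ (m(ξ,t) − A₂) dξ), one has X(y,t)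 = y − 2·ln â₁(y,t) + A₂²·t and u_x(X(y,t), t) = −(1/A₂)·∂_t∂_y ln â₁(y,t). -/
open MeasureTheory Filter Set Topology

/-- Max principle: if w'' = w - e with e ≤ E on [a,b], and w(a),w(b) ≤ E, then w ≤ E. -/
lemma stmt16_maxp {w w' e : ℝ → ℝ} {a b E : ℝ} (hab : a < b)
    (hw : ∀ ξ, HasDerivAt w (w' ξ) ξ)
    (hw' : ∀ ξ, HasDerivAt w' (w ξ - e ξ) ξ)
    (hE : ∀ ξ ∈ Set.Icc a b, e ξ ≤ E)
    (hwa : w a ≤ E) (hwb : w b ≤ E) :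
    ∀ ξ ∈ Set.Icc a b, w ξ ≤ E := by
  have hwc : Continuous w := by
    refine continuous_iff_continuousAt.2 fun ξ => (hw ξ).continuousAt
  obtain ⟨ξs, hξs, hmax⟩ := isCompact_Icc.exists_isMaxOn (nonempty_Icc.2 hab.le)
    hwc.continuousOn
  intro ξ hξ
  have key : w ξs ≤ E := by
    by_contra hgt
    push_neg at hgt
    have hne_a : ξs ≠ a := fun h => by rw [h] at hgt; linarith
    have hne_b : ξs ≠ b := fun h => by rw [h] at hgt; linarith
    have hlt : ξs ∈ Set.Ioo a b :=
      ⟨lt_of_le_of_ne hξs.1 (Ne.symm hne_a), lt_of_le_of_ne hξs.2 hne_b⟩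
    have hloc : IsLocalMax w ξs :=
      hmax.isLocalMax (Icc_mem_nhds hlt.1 hlt.2)
    have hderiv0 : w' ξs = 0 := hloc.hasDerivAt_eq_zero (hw ξs)
    have hcpos : 0 < w ξs - e ξs := by
      have := hE ξs ⟨hlt.1.le, hlt.2.le⟩; linarith
    -- slope of w' tends to w ξs - e ξs > 0, so w' > 0 just right of ξs
    have hslope := hasDerivAt_iff_tendsto_slope.1 (hw' ξs)
    have hev : ∀ᶠ s in 𝓝[≠] ξs, 0 < slope w' ξs s :=
      hslope.eventually (eventually_gt_nhds hcpos)
    have hev' : ∀ᶠ s in 𝓝[>] ξs, 0 < w' s := by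
      filter_upwards [nhdsWithin_mono ξs (fun s (hs : s ∈ Set.Ioi ξs) =>
          (ne_of_gt hs : s ≠ ξs)) hev,
        self_mem_nhdsWithin] with s hs hs'
      have hsub : 0 < s - ξs := sub_pos.2 hs'
      have : slope w' ξs s = (w' s - w' ξs) / (s - ξs) := by
        rw [slope_def_field]
      rw [this, hderiv0, sub_zero] at hs
      exact (div_pos_iff.1 hs).resolve_right (fun h => absurd hsub (by linarith [h.2])) |>.1
    obtain ⟨c, hc, hcP⟩ := (nhdsGT_basis ξs).eventually_iff.1 hev'
    set z := min c b
    have hz : ξs < z := lt_min hc hlt.2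
    set z' := (ξs + z) / 2
    have hz'1 : ξs < z' := by simp only [z']; linarith
    have hz'2 : z' < z := by simp only [z']; linarith
    have hmono : StrictMonoOn w (Set.Icc ξs z') := by
      apply strictMonoOn_of_hasDerivWithinAt_pos (convex_Icc _ _) hwc.continuousOn
        (fun x _ => ((hw x).hasDerivWithinAt))
      intro x hx
      rw [interior_Icc] at hx
      exact hcP ⟨hx.1, lt_of_lt_of_le (hx.2.trans hz'2) (min_le_left _ _)⟩
    have hlt2 : w ξs < w z' :=
      hmono (Set.left_mem_Icc.2 hz'1.le) (Set.right_mem_Icc.2 hz'1.le) hz'1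
    have hz'b : z' ∈ Set.Icc a b :=
      ⟨hlt.1.le.trans hz'1.le, (hz'2.trans_le (min_le_right _ _)).le⟩
    exact absurd (hmax hz'b) (not_le.2 hlt2)
  exact le_trans (hmax hξ) key


lemma stmt16_intOn_shift {f : ℝ → ℝ} (hc : Continuous f) {a : ℝ} (b : ℝ)
    (h : IntegrableOn f (Set.Ioi a)) : IntegrableOn f (Set.Ioi b) := by
  rcases le_total a b with hab | hab
  · exact h.mono_set (Set.Ioi_subset_Ioi hab)
  · rw [← Set.Ioc_union_Ioi_eq_Ioi hab]
    exact (integrableOn_union).2 ⟨hc.integrableOn_Ioc, h⟩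

lemma stmt16_Ioi_split {f : ℝ → ℝ} (hc : Continuous f)
    (hi : ∀ x : ℝ, IntegrableOn f (Set.Ioi x)) (x₀ x : ℝ) :
    ∫ ξ in Set.Ioi x, f ξ = (∫ ξ in Set.Ioi x₀, f ξ) - ∫ ξ in x₀..x, f ξ := by
  rcases le_total x₀ x with hab | hab
  · rw [intervalIntegral.integral_of_le hab, ← Set.Ioc_union_Ioi_eq_Ioi hab,
      setIntegral_union (Set.Ioc_disjoint_Ioi le_rfl) measurableSet_Ioi
        hc.integrableOn_Ioc (hi x)]
    ring
  · rw [intervalIntegral.integral_of_ge hab, ← Set.Ioc_union_Ioi_eq_Ioi hab,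
      setIntegral_union (Set.Ioc_disjoint_Ioi le_rfl) measurableSet_Ioi
        hc.integrableOn_Ioc (hi x₀)]
    ring

/-- derivative in the lower limit of an integral over `Ioi`. -/
lemma stmt16_hasDerivAt_Ioi {f : ℝ → ℝ} (hc : Continuous f)
    (hi : ∀ x : ℝ, IntegrableOn f (Set.Ioi x)) (x₀ : ℝ) :
    HasDerivAt (fun x => ∫ ξ in Set.Ioi x, f ξ) (-(f x₀)) x₀ := by
  have heq : (fun x => ∫ ξ in Set.Ioi x, f ξ)
      = fun x => (∫ ξ in Set.Ioi x₀, f ξ) - ∫ ξ in x₀..x, f ξ := by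
    funext x; exact stmt16_Ioi_split hc hi x₀ x
  rw [heq]
  have h2 : HasDerivAt (fun x => ∫ ξ in x₀..x, f ξ) (f x₀) x₀ :=
    intervalIntegral.integral_hasDerivAt_right (hc.intervalIntegrable _ _)
      (hc.stronglyMeasurableAtFilter _ _) hc.continuousAt
  exact ((hasDerivAt_const x₀ _).sub h2).congr_deriv (zero_sub _)


/-- chain rule for `t ↦ X (Ψ t) t` using joint continuity of the partial `Xy`. -/
lemma stmt16_chainA {T : ℝ} {X Xy : ℝ → ℝ → ℝ}
    (hXy : ∀ yv : ℝ, ∀ t ∈ Set.Ioo (0:ℝ) T, HasDerivAt (fun y' => X y' t) (Xy yv t) yv)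
    (hXycont : ContinuousOn (fun p : ℝ × ℝ => Xy p.1 p.2) (Set.univ ×ˢ Set.Ioo 0 T))
    {Ψ : ℝ → ℝ} {t₀ Ψ' Xt₀ : ℝ} (ht₀ : t₀ ∈ Set.Ioo (0:ℝ) T)
    (hΨ : HasDerivAt Ψ Ψ' t₀)
    (hXt₀ : HasDerivAt (fun t => X (Ψ t₀) t) Xt₀ t₀) :
    HasDerivAt (fun t => X (Ψ t) t) (Xy (Ψ t₀) t₀ * Ψ' + Xt₀) t₀ := by
  set y₀ := Ψ t₀ with hy₀
  have key : ∀ t ∈ Set.Ioo (0:ℝ) T, ∃ cc : ℝ, |cc - y₀| ≤ |Ψ t - y₀| ∧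
      X (Ψ t) t - X y₀ t = Xy cc t * (Ψ t - y₀) := by
    intro t ht
    have hcont : Continuous (fun y' => X y' t) :=
      continuous_iff_continuousAt.2 fun z => (hXy z t ht).continuousAt
    rcases lt_trichotomy (Ψ t) y₀ with h | h | h
    · obtain ⟨cc, hcc, heq⟩ := exists_hasDerivAt_eq_slope (fun y' => X y' t)
        (fun y' => Xy y' t) h hcont.continuousOn (fun z _ => hXy z t ht)
      refine ⟨cc, ?_, ?_⟩
      · rw [abs_of_nonpos (by linarith [hcc.2] : cc - y₀ ≤ 0),
          abs_of_nonpos (by linarith : Ψ t - y₀ ≤ 0)]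
        linarith [hcc.1]
      · have hne : y₀ - Ψ t ≠ 0 := by linarith
        field_simp at heq
        linarith [heq]
    · exact ⟨y₀, by simp [h]⟩
    · obtain ⟨cc, hcc, heq⟩ := exists_hasDerivAt_eq_slope (fun y' => X y' t)
        (fun y' => Xy y' t) h hcont.continuousOn (fun z _ => hXy z t ht)
      refine ⟨cc, ?_, ?_⟩
      · rw [abs_of_nonneg (by linarith [hcc.1] : (0:ℝ) ≤ cc - y₀),
          abs_of_nonneg (by linarith : (0:ℝ) ≤ Ψ t - y₀)]
        linarith [hcc.2]
      · have hne : Ψ t - y₀ ≠ 0 := by linarith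
        field_simp at heq
        linarith [heq]
  classical
  set c : ℝ → ℝ := fun t => if h : t ∈ Set.Ioo (0:ℝ) T then (key t h).choose else y₀
    with hc
  have hc1 : ∀ t (ht : t ∈ Set.Ioo (0:ℝ) T), |c t - y₀| ≤ |Ψ t - y₀| ∧
      X (Ψ t) t - X y₀ t = Xy (c t) t * (Ψ t - y₀) := by
    intro t ht
    simp only [hc, dif_pos ht]
    exact (key t ht).choose_spec
  have hΨc : ContinuousAt Ψ t₀ := hΨ.continuousAt
  have habs : Tendsto (fun t => |Ψ t - y₀|) (𝓝 t₀) (𝓝 0) := by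
    have : Tendsto (fun t => Ψ t - y₀) (𝓝 t₀) (𝓝 (Ψ t₀ - y₀)) :=
      hΨc.tendsto.sub tendsto_const_nhds
    have h := this.abs
    rw [← hy₀, sub_self, abs_zero] at h
    exact h
  have hctend : Tendsto c (𝓝[Set.Ioo (0:ℝ) T] t₀) (𝓝 y₀) := by
    rw [tendsto_iff_dist_tendsto_zero]
    refine tendsto_of_tendsto_of_tendsto_of_le_of_le' tendsto_const_nhds
      (habs.mono_left nhdsWithin_le_nhds) (Eventually.of_forall fun t => dist_nonneg) ?_
    filter_upwards [self_mem_nhdsWithin] with t ht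
    rw [Real.dist_eq]
    exact (hc1 t ht).1
  have hXyca : ContinuousAt (fun p : ℝ × ℝ => Xy p.1 p.2) (y₀, t₀) :=
    hXycont.continuousAt ((isOpen_univ.prod isOpen_Ioo).mem_nhds ⟨trivial, ht₀⟩)
  have hXyc_tend : Tendsto (fun t => Xy (c t) t) (𝓝[Set.Ioo (0:ℝ) T] t₀)
      (𝓝 (Xy y₀ t₀)) := by
    have hpair : Tendsto (fun t => ((c t, t) : ℝ × ℝ)) (𝓝[Set.Ioo (0:ℝ) T] t₀)
        (𝓝 (y₀, t₀)) :=
      hctend.prodMk_nhds (tendsto_id.mono_left nhdsWithin_le_nhds)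
    exact hXyca.tendsto.comp hpair
  have hΨslope : Tendsto (slope Ψ t₀) (𝓝[≠] t₀) (𝓝 Ψ') :=
    hasDerivAt_iff_tendsto_slope.1 hΨ
  have hA : HasDerivAt (fun t => X (Ψ t) t - X y₀ t) (Xy y₀ t₀ * Ψ') t₀ := by
    rw [hasDerivAt_iff_tendsto_slope]
    have hrestrict : 𝓝[≠] t₀ = 𝓝[{t₀}ᶜ ∩ Set.Ioo (0:ℝ) T] t₀ :=
      (nhdsWithin_restrict' _ (Ioo_mem_nhds ht₀.1 ht₀.2))
    rw [hrestrict]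
    have hmain : Tendsto (fun t => Xy (c t) t * slope Ψ t₀ t)
        (𝓝[{t₀}ᶜ ∩ Set.Ioo (0:ℝ) T] t₀) (𝓝 (Xy y₀ t₀ * Ψ')) :=
      (hXyc_tend.mono_left (nhdsWithin_mono _ inter_subset_right)).mul
        (hΨslope.mono_left (nhdsWithin_mono _ inter_subset_left))
    apply hmain.congr'
    filter_upwards [self_mem_nhdsWithin] with t ht
    have h2 := (hc1 t ht.2).2
    rw [slope_def_field, slope_def_field]
    have : X (Ψ t) t - X y₀ t - (X (Ψ t₀) t₀ - X y₀ t₀) = Xy (c t) t * (Ψ t - y₀) := by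
      rw [← hy₀]; rw [h2]; ring
    rw [← hy₀, this, mul_div_assoc]
  have hfun : (fun t => X (Ψ t) t)
      = fun t => (X (Ψ t) t - X y₀ t) + X y₀ t := by funext t; ring
  rw [hfun]
  exact hA.add hXt₀


/-- time-continuity of `ux` from an elliptic max principle. -/
lemma stmt16_uxcont {T : ℝ} {u ux uxx m : ℝ → ℝ → ℝ} {x t₀ : ℝ}
    (ht₀ : t₀ ∈ Set.Ioo (0:ℝ) T)
    (hux : ∀ ξ : ℝ, ∀ t ∈ Set.Ioo (0:ℝ) T, HasDerivAt (fun ζ => u ζ t) (ux ξ t) ξ)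
    (huxx : ∀ ξ : ℝ, ∀ t ∈ Set.Ioo (0:ℝ) T, HasDerivAt (fun ζ => ux ζ t) (uxx ξ t) ξ)
    (hm : ∀ ξ t, m ξ t = u ξ t - uxx ξ t)
    (hucont : ∀ ξ : ℝ, Tendsto (fun t => u ξ t) (𝓝[Set.Ioo (0:ℝ) T] t₀) (𝓝 (u ξ t₀)))
    (hmj : ∀ ξ : ℝ, ∀ t ∈ Set.Ioo (0:ℝ) T,
      ContinuousAt (fun p : ℝ × ℝ => m p.1 p.2) (ξ, t))
    (hmxc : ∀ t ∈ Set.Ioo (0:ℝ) T, Continuous (fun ξ => m ξ t)) :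
    Tendsto (fun t => ux x t) (𝓝[Set.Ioo (0:ℝ) T] t₀) (𝓝 (ux x t₀)) := by
  rw [Metric.tendsto_nhds]
  intro η ηpos
  set ε := η / 8 with hε
  have εpos : 0 < ε := by positivity
  -- tube lemma around Icc x (x+1) × {t₀}
  set U : Set (ℝ × ℝ) :=
    {p | p.2 ∈ Set.Ioo (0:ℝ) T ∧ |m p.1 p.2 - m p.1 t₀| < ε} with hU
  have hUopen : IsOpen U := by
    rw [isOpen_iff_mem_nhds]
    rintro ⟨ξ, t⟩ ⟨h1, h2⟩
    have hca : ContinuousAt (fun q : ℝ × ℝ => |m q.1 q.2 - m q.1 t₀|) (ξ, t) := by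
      have hin : ContinuousAt (fun q : ℝ × ℝ => ((q.1, t₀) : ℝ × ℝ)) (ξ, t) :=
        (continuous_fst.prodMk continuous_const).continuousAt
      have hcomp : ContinuousAt (fun q : ℝ × ℝ => m q.1 t₀) (ξ, t) :=
        (hmj ξ t₀ ht₀).tendsto.comp hin
      exact ((hmj ξ t h1).sub hcomp).abs
    have hev1 : {q : ℝ × ℝ | |m q.1 q.2 - m q.1 t₀| < ε} ∈ 𝓝 (ξ, t) :=
      hca.preimage_mem_nhds (Iio_mem_nhds h2)
    have hev2 : {q : ℝ × ℝ | q.2 ∈ Set.Ioo (0:ℝ) T} ∈ 𝓝 (ξ, t) :=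
      (isOpen_Ioo.preimage continuous_snd).mem_nhds h1
    filter_upwards [hev1, hev2] with q hq1 hq2
    exact ⟨hq2, hq1⟩
  have hsub : Set.Icc x (x+1) ×ˢ ({t₀} : Set ℝ) ⊆ U := by
    rintro ⟨ξ, t⟩ ⟨-, ht⟩
    rcases ht with rfl
    exact ⟨ht₀, by simpa using εpos⟩
  obtain ⟨v, wset, hv, hwset, hKv, htw, hvw⟩ :=
    generalized_tube_lemma isCompact_Icc isCompact_singleton hUopen hsub
  have hwnhds : wset ∈ 𝓝 t₀ := hwset.mem_nhds (htw rfl)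
  have e1 : ∀ᶠ t in 𝓝[Set.Ioo (0:ℝ) T] t₀, t ∈ wset :=
    Filter.eventually_of_mem (mem_nhdsWithin_of_mem_nhds hwnhds) (fun t ht => ht)
  have e3 : ∀ᶠ t in 𝓝[Set.Ioo (0:ℝ) T] t₀, |u x t - u x t₀| < ε := by
    have := Metric.tendsto_nhds.1 (hucont x) ε εpos
    simpa [Real.dist_eq] using this
  have e4 : ∀ᶠ t in 𝓝[Set.Ioo (0:ℝ) T] t₀, |u (x+1) t - u (x+1) t₀| < ε := by
    have := Metric.tendsto_nhds.1 (hucont (x+1)) ε εpos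
    simpa [Real.dist_eq] using this
  filter_upwards [e1, self_mem_nhdsWithin, e3, e4] with t htws htI h3 h4
  -- now the max principle estimate for fixed t
  set w : ℝ → ℝ := fun ξ => u ξ t - u ξ t₀ with hwdef
  set wp : ℝ → ℝ := fun ξ => ux ξ t - ux ξ t₀ with hwpdef
  set e : ℝ → ℝ := fun ξ => m ξ t - m ξ t₀ with hedef
  have hwd : ∀ ξ, HasDerivAt w (wp ξ) ξ := fun ξ => (hux ξ t htI).sub (hux ξ t₀ ht₀)
  have hwpd : ∀ ξ, HasDerivAt wp (w ξ - e ξ) ξ := by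
    intro ξ
    have h := (huxx ξ t htI).sub (huxx ξ t₀ ht₀)
    have : uxx ξ t - uxx ξ t₀ = w ξ - e ξ := by
      simp only [hwdef, hedef, hm ξ t, hm ξ t₀]; ring
    rwa [this] at h
  have hebound : ∀ ξ ∈ Set.Icc x (x+1), |e ξ| ≤ ε := by
    intro ξ hξ
    have : (ξ, t) ∈ U := hvw ⟨hKv hξ, htws⟩
    exact this.2.le
  have hup : ∀ ξ ∈ Set.Icc x (x+1), w ξ ≤ ε := by
    refine stmt16_maxp (by linarith) hwd hwpd
      (fun ξ hξ => (abs_le.1 (hebound ξ hξ)).2) ?_ ?_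
    · exact (abs_le.1 h3.le).2
    · exact (abs_le.1 h4.le).2
  have hdown : ∀ ξ ∈ Set.Icc x (x+1), -(w ξ) ≤ ε := by
    have hwd' : ∀ ξ, HasDerivAt (fun ζ => -(w ζ)) (-(wp ξ)) ξ := fun ξ => (hwd ξ).neg
    have hwpd' : ∀ ξ, HasDerivAt (fun ζ => -(wp ζ)) (-(w ξ) - -(e ξ)) ξ := by
      intro ξ
      have := (hwpd ξ).neg
      have h2 : -(w ξ - e ξ) = -(w ξ) - -(e ξ) := by ring
      rwa [h2] at this
    refine stmt16_maxp (by linarith) hwd' hwpd'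
      (fun ξ hξ => neg_le.1 (abs_le.1 (hebound ξ hξ)).1) ?_ ?_
    · exact neg_le.1 (abs_le.1 h3.le).1
    · exact neg_le.1 (abs_le.1 h4.le).1
  have habs : ∀ ξ ∈ Set.Icc x (x+1), |w ξ| ≤ ε := fun ξ hξ =>
    abs_le.2 ⟨neg_le.1 (hdown ξ hξ), hup ξ hξ⟩
  -- mean value theorem
  have hwc : Continuous w := continuous_iff_continuousAt.2 fun ξ => (hwd ξ).continuousAt
  obtain ⟨cmid, hcmid, hslope⟩ := exists_hasDerivAt_eq_slope w wp
    (by linarith : x < x + 1) hwc.continuousOn (fun ξ _ => hwd ξ)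
  have hwpc : |wp cmid| ≤ 2 * ε := by
    rw [hslope]
    have h1 : |w (x+1)| ≤ ε := habs _ (Set.right_mem_Icc.2 (by linarith))
    have h2 : |w x| ≤ ε := habs _ (Set.left_mem_Icc.2 (by linarith))
    have : |w (x+1) - w x| ≤ 2 * ε := by
      calc |w (x+1) - w x| ≤ |w (x+1)| + |w x| := abs_sub _ _
        _ ≤ 2 * ε := by linarith
    calc |(w (x+1) - w x) / (x + 1 - x)| = |w (x+1) - w x| := by
          norm_num
      _ ≤ 2 * ε := this
  -- FTC from x to cmid
  have hec : Continuous e := (hmxc t htI).sub (hmxc t₀ ht₀)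
  have hFTC : ∫ s in x..cmid, (w s - e s) = wp cmid - wp x :=
    intervalIntegral.integral_eq_sub_of_hasDerivAt (fun s _ => hwpd s)
      ((hwc.sub hec).intervalIntegrable _ _)
  have hintb : |∫ s in x..cmid, (w s - e s)| ≤ 2 * ε * |cmid - x| := by
    rw [← Real.norm_eq_abs]
    apply intervalIntegral.norm_integral_le_of_norm_le_const
    intro s hs
    rw [Set.uIoc_of_le hcmid.1.le] at hs
    have hsI : s ∈ Set.Icc x (x+1) := ⟨hs.1.le, hs.2.trans hcmid.2.le⟩
    have := habs s hsI
    have := hebound s hsI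
    calc ‖w s - e s‖ = |w s - e s| := rfl
      _ ≤ |w s| + |e s| := abs_sub _ _
      _ ≤ 2 * ε := by linarith
  have hcx : |cmid - x| ≤ 1 := by
    rw [abs_of_pos (by linarith [hcmid.1] : (0:ℝ) < cmid - x)]
    linarith [hcmid.2]
  have : |wp x| < η := by
    have h5 : |wp x| ≤ |wp cmid| + |∫ s in x..cmid, (w s - e s)| := by
      have : wp x = wp cmid - (wp cmid - wp x) := by ring
      rw [this, ← hFTC]
      exact abs_sub _ _
    have h6 : 2 * ε * |cmid - x| ≤ 2 * ε := by nlinarith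
    rw [hε] at *
    linarith
  simpa [Real.dist_eq, hwpdef] using this
/-- properties of the inverse change of variables X(y,t) of
y(x,t) = x − (1/A₂)·∫_x^∞ (m(ξ,t) − A₂) dξ − A₂²·t, and the parametric
representation of u_x via â₁. -/
theorem stmt_16 (A2 T : ℝ) (hA : 0 < A2) (hT : 0 < T)
    (u ux uxx m mx mt gx : ℝ → ℝ → ℝ)
    (hu3 : ∀ t ∈ Set.Ioo 0 T, ContDiff ℝ 3 (fun x => u x t))
    (hut : ∀ x, ContDiffOn ℝ 1 (fun t => u x t) (Set.Ioo 0 T))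
    (hux : ∀ x, ∀ t ∈ Set.Ioo 0 T, HasDerivAt (fun ξ => u ξ t) (ux x t) x)
    (huxx : ∀ x, ∀ t ∈ Set.Ioo 0 T, HasDerivAt (fun ξ => ux ξ t) (uxx x t) x)
    (hm : ∀ x t, m x t = u x t - uxx x t)
    (hmpos : ∀ x, ∀ t ∈ Set.Ioo 0 T, 0 < m x t)
    (hmx : ∀ x, ∀ t ∈ Set.Ioo 0 T, HasDerivAt (fun ξ => m ξ t) (mx x t) x)
    (hmt : ∀ x, ∀ t ∈ Set.Ioo 0 T, HasDerivAt (fun τ => m x τ) (mt x t) t)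
    (hgx : ∀ x, ∀ t ∈ Set.Ioo 0 T,
      HasDerivAt (fun ξ => ((u ξ t)^2 - (ux ξ t)^2) * m ξ t) (gx x t) x)
    (hmch : ∀ x, ∀ t ∈ Set.Ioo 0 T, mt x t + gx x t = 0)
    (hint : ∀ x, ∀ t ∈ Set.Ioo 0 T, IntegrableOn (fun ξ => m ξ t - A2) (Set.Ioi x))
    (hdiff : ∀ x, ∀ t ∈ Set.Ioo 0 T,
      HasDerivAt (fun τ => ∫ ξ in Set.Ioi x, (m ξ τ - A2))
        (∫ ξ in Set.Ioi x, mt ξ t) t)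
    (hlim : ∀ t ∈ Set.Ioo 0 T,
      Tendsto (fun ξ => ((u ξ t)^2 - (ux ξ t)^2) * m ξ t) atTop (nhds (A2^3)))
    (y : ℝ → ℝ → ℝ)
    (hy : ∀ x t, y x t =
      x - (1/A2) * (∫ ξ in Set.Ioi x, (m ξ t - A2)) - A2^2 * t)
    (X Xy Xt Xyt : ℝ → ℝ → ℝ)
    (hXy : ∀ yv, ∀ t ∈ Set.Ioo 0 T, HasDerivAt (fun y' => X y' t) (Xy yv t) yv)
    (hXt : ∀ yv, ∀ t ∈ Set.Ioo 0 T, HasDerivAt (fun t' => X yv t') (Xt yv t) t)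
    (hXyt : ∀ yv, ∀ t ∈ Set.Ioo 0 T, HasDerivAt (fun t' => Xy yv t') (Xyt yv t) t)
    (hXycont : ContinuousOn (fun p : ℝ × ℝ => Xy p.1 p.2)
      (Set.univ ×ˢ Set.Ioo 0 T))
    (hXtcont : ContinuousOn (fun p : ℝ × ℝ => Xt p.1 p.2)
      (Set.univ ×ˢ Set.Ioo 0 T))
    (hXytcont : ContinuousOn (fun p : ℝ × ℝ => Xyt p.1 p.2)
      (Set.univ ×ˢ Set.Ioo 0 T))
    (hinv : ∀ yv, ∀ t ∈ Set.Ioo 0 T, y (X yv t) t = yv)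
    (a1 : ℝ → ℝ → ℝ)
    (ha1 : ∀ yv t, a1 yv t =
      Real.exp (-(1/(2*A2)) * ∫ ξ in Set.Ioi (X yv t), (m ξ t - A2))) :
    ∀ yv, ∀ t ∈ Set.Ioo 0 T,
      Xy yv t = A2 / m (X yv t) t ∧
      Xt yv t = (u (X yv t) t)^2 - (ux (X yv t) t)^2 ∧
      Xyt yv t = 2 * A2 * ux (X yv t) t ∧
      X yv t = yv - 2 * Real.log (a1 yv t) + A2^2 * t ∧
      ux (X yv t) t =
        -(1/A2) * deriv (fun t' => deriv (fun y' => Real.log (a1 y' t')) yv) t := by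
  -- ======================= x-regularity per time slice =======================
  have huxdef : ∀ t ∈ Set.Ioo (0:ℝ) T, (fun ξ => ux ξ t) = deriv (fun ξ => u ξ t) := by
    intro t ht; funext ξ; exact ((hux ξ t ht).deriv).symm
  have huxC2 : ∀ t ∈ Set.Ioo (0:ℝ) T, ContDiff ℝ 2 (fun ξ => ux ξ t) := by
    intro t ht
    rw [huxdef t ht]
    have h3 := hu3 t ht
    rw [show (3 : WithTop ℕ∞) = 2 + 1 from by norm_num] at h3
    exact (contDiff_succ_iff_deriv.1 h3).2.2
  have huxxC1 : ∀ t ∈ Set.Ioo (0:ℝ) T, ContDiff ℝ 1 (fun ξ => uxx ξ t) := by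
    intro t ht
    have h0 : (fun ξ => uxx ξ t) = deriv (fun ξ => ux ξ t) :=
      funext fun ξ => ((huxx ξ t ht).deriv).symm
    rw [h0]
    have h2 := huxC2 t ht
    rw [show (2 : WithTop ℕ∞) = 1 + 1 from by norm_num] at h2
    exact (contDiff_succ_iff_deriv.1 h2).2.2
  have hmC1 : ∀ t ∈ Set.Ioo (0:ℝ) T, ContDiff ℝ 1 (fun ξ => m ξ t) := by
    intro t ht
    have h0 : (fun ξ => m ξ t) = fun ξ => u ξ t - uxx ξ t := funext fun ξ => hm ξ t
    rw [h0]
    exact ((hu3 t ht).of_le (by norm_num)).sub (huxxC1 t ht)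
  have hmxc : ∀ t ∈ Set.Ioo (0:ℝ) T, Continuous (fun ξ => m ξ t) :=
    fun t ht => (hmC1 t ht).continuous
  have hgxc : ∀ t ∈ Set.Ioo (0:ℝ) T, Continuous (fun ξ => gx ξ t) := by
    intro t ht
    have hGC1 : ContDiff ℝ 1 (fun ξ => ((u ξ t)^2 - (ux ξ t)^2) * m ξ t) :=
      ((((hu3 t ht).of_le (by norm_num)).pow 2).sub
        (((huxC2 t ht).of_le (by norm_num)).pow 2)).mul (hmC1 t ht)
    have h0 : (fun ξ => gx ξ t) = deriv (fun ξ => ((u ξ t)^2 - (ux ξ t)^2) * m ξ t) :=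
      funext fun ξ => ((hgx ξ t ht).deriv).symm
    rw [h0]
    exact (contDiff_one_iff_deriv.1 hGC1).2
  have hmteq : ∀ ξ : ℝ, ∀ t ∈ Set.Ioo (0:ℝ) T, mt ξ t = -gx ξ t :=
    fun ξ t ht => by have := hmch ξ t ht; linarith
  have hmtc : ∀ t ∈ Set.Ioo (0:ℝ) T, Continuous (fun ξ => mt ξ t) := by
    intro t ht
    have : (fun ξ => mt ξ t) = fun ξ => -gx ξ t := funext fun ξ => hmteq ξ t ht
    rw [this]; exact (hgxc t ht).neg
  -- ================= derivative of F(x,t) = ∫_{Ioi x} (m - A2) in x ==========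
  have hFd : ∀ t ∈ Set.Ioo (0:ℝ) T, ∀ x₀ : ℝ,
      HasDerivAt (fun x => ∫ ξ in Set.Ioi x, (m ξ t - A2)) (-(m x₀ t - A2)) x₀ :=
    fun t ht x₀ => stmt16_hasDerivAt_Ioi ((hmxc t ht).sub continuous_const)
      (fun x => hint x t ht) x₀
  have hyd : ∀ t ∈ Set.Ioo (0:ℝ) T, ∀ x : ℝ,
      HasDerivAt (fun x' => y x' t) (m x t / A2) x := by
    intro t ht x
    have h1 : (fun x' => y x' t)
        = fun x' => x' - (1/A2) * (∫ ξ in Set.Ioi x', (m ξ t - A2)) - A2^2 * t :=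
      funext fun x' => hy x' t
    rw [h1]
    have h2 := ((hasDerivAt_id x).sub ((hFd t ht x).const_mul (1/A2))).sub_const (A2^2*t)
    refine h2.congr_deriv ?_
    field_simp
    ring
  -- =========================== (i) : Xy = A2/m(X) ============================
  have hXy_eq : ∀ yv : ℝ, ∀ t ∈ Set.Ioo (0:ℝ) T, Xy yv t = A2 / m (X yv t) t := by
    intro yv t ht
    have hcomp : HasDerivAt (fun y' => y (X y' t) t) (m (X yv t) t / A2 * Xy yv t) yv :=
      by have := (hyd t ht (X yv t)).comp yv (hXy yv t ht); exact this
    have hid : (fun y' => y (X y' t) t) = fun y' => y' := funext fun y' => hinv y' t ht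
    rw [hid] at hcomp
    have h1 := hcomp.unique (hasDerivAt_id yv)
    have hm0 := (hmpos (X yv t) t ht).ne'
    have hA0 : A2 ≠ 0 := hA.ne'
    field_simp at h1 ⊢
    linarith
  have hXypos : ∀ yv : ℝ, ∀ t ∈ Set.Ioo (0:ℝ) T, 0 < Xy yv t := by
    intro yv t ht
    rw [hXy_eq yv t ht]
    exact div_pos hA (hmpos _ t ht)
  have hXmono : ∀ t ∈ Set.Ioo (0:ℝ) T, StrictMono (fun yv => X yv t) := by
    intro t ht
    apply strictMono_of_deriv_pos
    intro z
    rw [(hXy z t ht).deriv]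
    exact hXypos z t ht
  have hymono : ∀ t ∈ Set.Ioo (0:ℝ) T, StrictMono (fun x => y x t) := by
    intro t ht
    apply strictMono_of_deriv_pos
    intro z
    rw [(hyd t ht z).deriv]
    exact div_pos (hmpos z t ht) hA
  have hXyx : ∀ t ∈ Set.Ioo (0:ℝ) T, ∀ x : ℝ, X (y x t) t = x :=
    fun t ht x => (hymono t ht).injective (by rw [hinv (y x t) t ht])
  -- ====================== joint continuity of y and m =======================
  have hyjc : ∀ (x₀ t₀ : ℝ), t₀ ∈ Set.Ioo (0:ℝ) T →
      ContinuousAt (fun p : ℝ × ℝ => y p.1 p.2) (x₀, t₀) := by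
    intro x₀ t₀ ht₀
    rw [ContinuousAt, Metric.tendsto_nhds]
    intro ε εpos
    set y₀ := y x₀ t₀ with hy₀def
    have hXy₀ : X y₀ t₀ = x₀ := hXyx t₀ ht₀ x₀
    set ε' := ε / 2 with hε'def
    have hε'pos : 0 < ε' := by positivity
    have hl : X (y₀ - ε') t₀ < x₀ := by
      rw [← hXy₀]; exact hXmono t₀ ht₀ (by linarith)
    have hr : x₀ < X (y₀ + ε') t₀ := by
      rw [← hXy₀]; exact hXmono t₀ ht₀ (by linarith)
    set ρ := min (x₀ - X (y₀ - ε') t₀) (X (y₀ + ε') t₀ - x₀) / 2 with hρdef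
    have hρpos : 0 < ρ := by
      apply div_pos _ (by norm_num)
      exact lt_min (by linarith) (by linarith)
    have hρl : X (y₀ - ε') t₀ < x₀ - ρ := by
      have := min_le_left (x₀ - X (y₀ - ε') t₀) (X (y₀ + ε') t₀ - x₀)
      simp only [hρdef]; linarith
    have hρr : x₀ + ρ < X (y₀ + ε') t₀ := by
      have := min_le_right (x₀ - X (y₀ - ε') t₀) (X (y₀ + ε') t₀ - x₀)
      simp only [hρdef]; linarith
    have hevl : ∀ᶠ t in 𝓝 t₀, X (y₀ - ε') t < x₀ - ρ :=
      (hXt (y₀ - ε') t₀ ht₀).continuousAt.eventually_lt continuousAt_const hρl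
    have hevr : ∀ᶠ t in 𝓝 t₀, x₀ + ρ < X (y₀ + ε') t :=
      continuousAt_const.eventually_lt (hXt (y₀ + ε') t₀ ht₀).continuousAt hρr
    have hevI : ∀ᶠ t in 𝓝 t₀, t ∈ Set.Ioo (0:ℝ) T :=
      isOpen_Ioo.eventually_mem ht₀
    have hevx : ∀ᶠ x in 𝓝 x₀, |x - x₀| < ρ := by
      have : Tendsto (fun x : ℝ => |x - x₀|) (𝓝 x₀) (𝓝 0) := by
        have := (continuous_id.sub (continuous_const (y := x₀))).abs.tendsto x₀
        simpa using this
      exact this.eventually (eventually_lt_nhds hρpos)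
    have hprod : ∀ᶠ p : ℝ × ℝ in 𝓝 (x₀, t₀), |p.1 - x₀| < ρ ∧
        (X (y₀ - ε') p.2 < x₀ - ρ ∧ x₀ + ρ < X (y₀ + ε') p.2 ∧ p.2 ∈ Set.Ioo (0:ℝ) T) := by
      rw [nhds_prod_eq]
      exact hevx.prod_mk ((hevl.and (hevr.and hevI)))
    filter_upwards [hprod] with p hp
    obtain ⟨h1, h2, h3, h4⟩ := hp
    have hxl : X (y₀ - ε') p.2 < p.1 := by
      have := abs_lt.1 h1; linarith [this.1]
    have hxr : p.1 < X (y₀ + ε') p.2 := by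
      have := abs_lt.1 h1; linarith [this.2]
    have hyl : y₀ - ε' < y p.1 p.2 := by
      have h5 := hymono p.2 h4 hxl
      simp only [] at h5
      rwa [hinv (y₀ - ε') p.2 h4] at h5
    have hyr : y p.1 p.2 < y₀ + ε' := by
      have h5 := hymono p.2 h4 hxr
      simp only [] at h5
      rwa [hinv (y₀ + ε') p.2 h4] at h5
    rw [Real.dist_eq]
    have : |y p.1 p.2 - y₀| ≤ ε' := abs_le.2 ⟨by linarith, by linarith⟩
    linarith
  have hmjc : ∀ (x₀ t₀ : ℝ), t₀ ∈ Set.Ioo (0:ℝ) T →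
      ContinuousAt (fun p : ℝ × ℝ => m p.1 p.2) (x₀, t₀) := by
    intro x₀ t₀ ht₀
    have hev : ∀ᶠ p : ℝ × ℝ in 𝓝 (x₀, t₀), A2 / Xy (y p.1 p.2) p.2 = m p.1 p.2 := by
      have hIoo : ∀ᶠ p : ℝ × ℝ in 𝓝 (x₀, t₀), p.2 ∈ Set.Ioo (0:ℝ) T :=
        (isOpen_Ioo.preimage continuous_snd).eventually_mem
          (show ((x₀,t₀) : ℝ × ℝ) ∈ {q : ℝ × ℝ | q.2 ∈ Set.Ioo (0:ℝ) T} from ht₀)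
      filter_upwards [hIoo] with p hp
      have h0 := hXy_eq (y p.1 p.2) p.2 hp
      rw [hXyx p.2 hp p.1] at h0
      rw [h0]
      field_simp
    have hR : ContinuousAt (fun p : ℝ × ℝ => A2 / Xy (y p.1 p.2) p.2) (x₀, t₀) := by
      have hXyca : ContinuousAt (fun q : ℝ × ℝ => Xy q.1 q.2) (y x₀ t₀, t₀) :=
        hXycont.continuousAt ((isOpen_univ.prod isOpen_Ioo).mem_nhds ⟨trivial, ht₀⟩)
      have hinner : ContinuousAt (fun p : ℝ × ℝ => ((y p.1 p.2, p.2) : ℝ × ℝ)) (x₀, t₀) :=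
        (hyjc x₀ t₀ ht₀).prodMk continuous_snd.continuousAt
      have hcomp : ContinuousAt (fun p : ℝ × ℝ => Xy (y p.1 p.2) p.2) (x₀, t₀) :=
        hXyca.tendsto.comp hinner
      apply continuousAt_const.div hcomp
      rw [hXy_eq (y x₀ t₀) t₀ ht₀]
      have := hmpos (X (y x₀ t₀) t₀) t₀ ht₀
      positivity
    exact hR.congr hev
  -- ====================== the chain-rule identity ============================
  have hchain : ∀ t ∈ Set.Ioo (0:ℝ) T, ∀ x₀ : ℝ,
      m x₀ t * Xt (y x₀ t) t = (∫ ξ in Set.Ioi x₀, mt ξ t) + A2^3 := by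
    intro t₀ ht₀ x₀
    have hΨd : HasDerivAt (fun t => y x₀ t)
        (-((1/A2) * (∫ ξ in Set.Ioi x₀, mt ξ t₀) + A2^2)) t₀ := by
      have h1 : (fun t => y x₀ t)
          = fun t => x₀ - (1/A2) * (∫ ξ in Set.Ioi x₀, (m ξ t - A2)) - A2^2 * t :=
        funext fun t => hy x₀ t
      rw [h1]
      have h2 := ((hasDerivAt_const t₀ x₀).sub ((hdiff x₀ t₀ ht₀).const_mul (1/A2))).sub
        ((hasDerivAt_id t₀).const_mul (A2^2))
      refine h2.congr_deriv ?_
      ring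
    have hchA := stmt16_chainA hXy hXycont ht₀ hΨd (hXt (y x₀ t₀) t₀ ht₀)
    have hconst : (fun t => X (y x₀ t) t) =ᶠ[𝓝 t₀] (fun _ => x₀) := by
      filter_upwards [Ioo_mem_nhds ht₀.1 ht₀.2] with t ht
      exact hXyx t ht x₀
    have h0 : Xy (y x₀ t₀) t₀ * (-((1/A2) * (∫ ξ in Set.Ioi x₀, mt ξ t₀) + A2^2))
        + Xt (y x₀ t₀) t₀ = 0 :=
      (hchA.congr_of_eventuallyEq hconst.symm).unique (hasDerivAt_const t₀ x₀)
    rw [hXy_eq (y x₀ t₀) t₀ ht₀, hXyx t₀ ht₀ x₀] at h0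
    have hm0 := (hmpos x₀ t₀ ht₀).ne'
    have hA0 : A2 ≠ 0 := hA.ne'
    field_simp at h0
    nlinarith [h0]
  -- ================== FTC at ∞ when mt is integrable =========================
  have hIoiInt : ∀ t ∈ Set.Ioo (0:ℝ) T, ∀ x : ℝ,
      IntegrableOn (fun ξ => mt ξ t) (Set.Ioi x) →
      (∫ ξ in Set.Ioi x, mt ξ t) = ((u x t)^2 - (ux x t)^2) * m x t - A2^3 := by
    intro t ht x hInt
    have hgxInt : IntegrableOn (fun ξ => gx ξ t) (Set.Ioi x) := by
      have h1 : IntegrableOn (fun ξ => -mt ξ t) (Set.Ioi x) := hInt.neg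
      apply h1.congr_fun ?_ measurableSet_Ioi
      intro ξ _
      simp only []
      rw [hmteq ξ t ht]; ring
    have hFTC := integral_Ioi_of_hasDerivAt_of_tendsto' (fun ξ _ => hgx ξ t ht)
      hgxInt (hlim t ht)
    have h2 : (∫ ξ in Set.Ioi x, mt ξ t) = -∫ ξ in Set.Ioi x, gx ξ t := by
      rw [← integral_neg]
      apply setIntegral_congr_fun measurableSet_Ioi
      intro ξ _
      exact hmteq ξ t ht
    rw [h2, hFTC]
    ring
  -- ===================== integrability of mt (key step) ======================
  have hPkey : ∀ t ∈ Set.Ioo (0:ℝ) T, ∀ x : ℝ,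
      IntegrableOn (fun ξ => mt ξ t) (Set.Ioi x) := by
    intro t₀ ht₀
    by_cases hP : IntegrableOn (fun ξ => mt ξ t₀) (Set.Ioi 0)
    · exact fun x => stmt16_intOn_shift (hmtc t₀ ht₀) x hP
    exfalso
    set s : Set ℝ :=
      {t | t ∈ Set.Ioo (0:ℝ) T ∧ IntegrableOn (fun ξ => mt ξ t) (Set.Ioi 0)} with hsdef
    -- Step α: t₀ ∈ closure s
    have hclos : t₀ ∈ closure s := by
      rw [mem_closure_iff_nhds]
      by_contra hcon
      push_neg at hcon
      obtain ⟨U, hU, hUs⟩ := hcon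
      obtain ⟨δ, δpos, hball⟩ := Metric.mem_nhds_iff.1 hU
      set lo := max (t₀ - δ/2) 0 with hlodef
      set hi := min (t₀ + δ/2) T with hhidef
      have hloT : lo < t₀ := max_lt (by linarith) ht₀.1
      have hhiT : t₀ < hi := lt_min (by linarith) ht₀.2
      have hJIoo : ∀ τ ∈ Set.Ioo lo hi, τ ∈ Set.Ioo (0:ℝ) T := fun τ hτ =>
        ⟨lt_of_le_of_lt (le_max_right _ _) hτ.1, lt_of_lt_of_le hτ.2 (min_le_right _ _)⟩
      have hJball : ∀ τ ∈ Set.Ioo lo hi, τ ∈ Metric.ball t₀ δ := by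
        intro τ hτ
        rw [Metric.mem_ball, Real.dist_eq]
        have h1 : t₀ - δ/2 ≤ lo := le_max_left _ _
        have h2 : hi ≤ t₀ + δ/2 := min_le_left _ _
        rw [abs_lt]
        constructor
        · linarith [hτ.1]
        · linarith [hτ.2]
      have hnots : ∀ τ ∈ Set.Ioo lo hi, ¬ IntegrableOn (fun ξ => mt ξ τ) (Set.Ioi 0) := by
        intro τ hτ hIτ
        rw [Set.eq_empty_iff_forall_notMem] at hUs
        exact hUs τ ⟨hball (hJball τ hτ), hJIoo τ hτ, hIτ⟩
      have hzero : ∀ τ ∈ Set.Ioo lo hi, ∀ x : ℝ, (∫ ξ in Set.Ioi x, mt ξ τ) = 0 := by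
        intro τ hτ x
        apply integral_undef
        intro hIx
        exact hnots τ hτ (stmt16_intOn_shift (hmtc τ (hJIoo τ hτ)) 0 hIx)
      have ht₀J : t₀ ∈ Set.Ioo lo hi := ⟨hloT, hhiT⟩
      have hFt : ∀ x' : ℝ, ∀ τ ∈ Set.Ioo lo hi,
          (∫ ξ in Set.Ioi x', (m ξ τ - A2)) = (∫ ξ in Set.Ioi x', (m ξ t₀ - A2)) := by
        intro x'
        have hstep : ∀ a ∈ Set.Ioo lo hi, ∀ b ∈ Set.Ioo lo hi, a < b →
            (∫ ξ in Set.Ioi x', (m ξ a - A2)) = (∫ ξ in Set.Ioi x', (m ξ b - A2)) := by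
          intro a ha b hb hab
          have hcont : ContinuousOn (fun τ => ∫ ξ in Set.Ioi x', (m ξ τ - A2))
              (Set.Icc a b) := by
            intro τ hτ'
            have hmem : τ ∈ Set.Ioo lo hi :=
              ⟨lt_of_lt_of_le ha.1 hτ'.1, lt_of_le_of_lt hτ'.2 hb.2⟩
            exact ((hdiff x' τ (hJIoo τ hmem)).continuousAt).continuousWithinAt
          have hder : ∀ τ ∈ Set.Ioo a b,
              HasDerivAt (fun τ => ∫ ξ in Set.Ioi x', (m ξ τ - A2)) ((fun _ => (0:ℝ)) τ) τ := by
            intro τ hτ'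
            have hmem : τ ∈ Set.Ioo lo hi := ⟨lt_trans ha.1 hτ'.1, lt_trans hτ'.2 hb.2⟩
            have h3 := hdiff x' τ (hJIoo τ hmem)
            rwa [hzero τ hmem x'] at h3
          obtain ⟨c, _, hceq⟩ := exists_hasDerivAt_eq_slope
            (fun τ => ∫ ξ in Set.Ioi x', (m ξ τ - A2)) (fun _ => (0:ℝ)) hab hcont hder
          have hba : b - a ≠ 0 := by linarith
          field_simp at hceq
          linarith [hceq]
        intro τ hτ
        rcases lt_trichotomy τ t₀ with h | h | h
        · exact hstep τ hτ t₀ ht₀J h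
        · rw [h]
        · exact (hstep t₀ ht₀J τ hτ h).symm
      have hmconst : ∀ x : ℝ, ∀ τ ∈ Set.Ioo lo hi, m x τ = m x t₀ := by
        intro x τ hτ
        have h1 := hFd τ (hJIoo τ hτ) x
        have h2 := hFd t₀ ht₀ x
        have heqf : (fun x' => ∫ ξ in Set.Ioi x', (m ξ τ - A2))
            = (fun x' => ∫ ξ in Set.Ioi x', (m ξ t₀ - A2)) := funext fun x' => hFt x' τ hτ
        rw [heqf] at h1
        have h3 := h1.unique h2
        linarith
      have hmt0 : ∀ x : ℝ, mt x t₀ = 0 := by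
        intro x
        have hev : (fun _ => m x t₀) =ᶠ[𝓝 t₀] (fun τ => m x τ) := by
          filter_upwards [Ioo_mem_nhds hloT hhiT] with τ hτ
          exact (hmconst x τ hτ).symm
        have h1 := (hmt x t₀ ht₀).congr_of_eventuallyEq hev
        exact h1.unique (hasDerivAt_const _ _)
      apply hP
      have hz : (fun ξ => mt ξ t₀) = fun _ => (0:ℝ) := funext fun ξ => hmt0 ξ
      rw [hz]
      exact integrableOn_zero
    -- Step β: approach t₀ from within s
    have hne : (𝓝[s] t₀).NeBot := mem_closure_iff_nhdsWithin_neBot.1 hclos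
    have hgA : ∀ x : ℝ, ((u x t₀)^2 - (ux x t₀)^2) * m x t₀ = A2^3 := by
      intro x
      have hyc : ContinuousAt (fun t => y x t) t₀ := by
        have h1 : (fun t => y x t)
            = fun t => x - (1/A2) * (∫ ξ in Set.Ioi x, (m ξ t - A2)) - A2^2 * t :=
          funext fun t => hy x t
        rw [h1]
        exact (continuousAt_const.sub
          (continuousAt_const.mul (hdiff x t₀ ht₀).continuousAt)).sub
          ((continuous_const.mul continuous_id).continuousAt)
      have hXtyc : ContinuousAt (fun t => Xt (y x t) t) t₀ := by
        have houter : ContinuousAt (fun q : ℝ × ℝ => Xt q.1 q.2) (y x t₀, t₀) :=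
          hXtcont.continuousAt ((isOpen_univ.prod isOpen_Ioo).mem_nhds ⟨trivial, ht₀⟩)
        exact houter.tendsto.comp (hyc.prodMk continuous_id.continuousAt)
      have hL : Tendsto (fun t => m x t * Xt (y x t) t) (𝓝[s] t₀)
          (𝓝 (m x t₀ * Xt (y x t₀) t₀)) :=
        ((hmt x t₀ ht₀).continuousAt.mul hXtyc).tendsto.mono_left nhdsWithin_le_nhds
      have hLval : m x t₀ * Xt (y x t₀) t₀ = A2^3 := by
        have h1 := hchain t₀ ht₀ x
        have hnI : ¬ Integrable (fun ξ => mt ξ t₀) (volume.restrict (Set.Ioi x)) := by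
          intro hIx
          exact hP (stmt16_intOn_shift (hmtc t₀ ht₀) 0 hIx)
        rw [integral_undef hnI] at h1
        simpa using h1
      have hR : Tendsto (fun t => ((u x t)^2 - (ux x t)^2) * m x t) (𝓝[s] t₀)
          (𝓝 (((u x t₀)^2 - (ux x t₀)^2) * m x t₀)) := by
        have hsub : 𝓝[s] t₀ ≤ 𝓝[Set.Ioo (0:ℝ) T] t₀ :=
          nhdsWithin_mono _ (fun τ hτ => hτ.1)
        have hu_t : Tendsto (fun t => u x t) (𝓝[Set.Ioo (0:ℝ) T] t₀) (𝓝 (u x t₀)) :=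
          (hut x).continuousOn.continuousWithinAt ht₀
        have hux_t : Tendsto (fun t => ux x t) (𝓝[Set.Ioo (0:ℝ) T] t₀) (𝓝 (ux x t₀)) :=
          stmt16_uxcont ht₀ hux huxx hm
            (fun ξ => (hut ξ).continuousOn.continuousWithinAt ht₀)
            (fun ξ t ht => hmjc ξ t ht) hmxc
        have hm_t : Tendsto (fun t => m x t) (𝓝[Set.Ioo (0:ℝ) T] t₀) (𝓝 (m x t₀)) :=
          (hmt x t₀ ht₀).continuousAt.continuousWithinAt
        exact (((hu_t.pow 2).sub (hux_t.pow 2)).mul hm_t).mono_left hsub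
      have hEq : (fun t => m x t * Xt (y x t) t) =ᶠ[𝓝[s] t₀]
          (fun t => ((u x t)^2 - (ux x t)^2) * m x t) := by
        filter_upwards [self_mem_nhdsWithin] with τ hτ
        have h1 := hchain τ hτ.1 x
        rw [hIoiInt τ hτ.1 x (stmt16_intOn_shift (hmtc τ hτ.1) x hτ.2)] at h1
        linarith
      have hfin := tendsto_nhds_unique (hL.congr' hEq) hR
      rw [← hfin]
      exact hLval
    have hgx0 : ∀ x : ℝ, gx x t₀ = 0 := by
      intro x
      have hconstg : (fun ξ => ((u ξ t₀)^2 - (ux ξ t₀)^2) * m ξ t₀) = fun _ => A2^3 :=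
        funext fun ξ => hgA ξ
      have h1 := hgx x t₀ ht₀
      rw [hconstg] at h1
      exact h1.unique (hasDerivAt_const _ _)
    apply hP
    have hz : (fun ξ => mt ξ t₀) = fun _ => (0:ℝ) := funext fun ξ => by
      rw [hmteq ξ t₀ ht₀, hgx0 ξ]; ring
    rw [hz]
    exact integrableOn_zero
  -- ============================ (ii) ========================================
  have hXt_eq : ∀ yv : ℝ, ∀ t ∈ Set.Ioo (0:ℝ) T,
      Xt yv t = (u (X yv t) t)^2 - (ux (X yv t) t)^2 := by
    intro yv t ht
    have h1 := hchain t ht (X yv t)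
    rw [hinv yv t ht, hIoiInt t ht (X yv t) (hPkey t ht (X yv t))] at h1
    have hm0 := (hmpos (X yv t) t ht).ne'
    have h2 : m (X yv t) t * Xt yv t
        = m (X yv t) t * ((u (X yv t) t)^2 - (ux (X yv t) t)^2) := by linarith
    exact mul_left_cancel₀ hm0 h2
  -- ============================ (iii) =======================================
  have hXyt_eq : ∀ yv : ℝ, ∀ t ∈ Set.Ioo (0:ℝ) T,
      Xyt yv t = 2 * A2 * ux (X yv t) t := by
    intro yv t₀ ht₀
    set y1 := yv - 1 with hy1def
    have hXyC : ∀ t ∈ Set.Ioo (0:ℝ) T, Continuous (fun sv => Xy sv t) := by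
      intro t ht
      refine continuous_iff_continuousAt.2 fun sv => ?_
      have houter : ContinuousAt (fun q : ℝ × ℝ => Xy q.1 q.2) (sv, t) :=
        hXycont.continuousAt ((isOpen_univ.prod isOpen_Ioo).mem_nhds ⟨trivial, ht⟩)
      exact houter.tendsto.comp ((continuous_id.prodMk continuous_const).continuousAt)
    have hXytC : Continuous (fun sv => Xyt sv t₀) := by
      refine continuous_iff_continuousAt.2 fun sv => ?_
      have houter : ContinuousAt (fun q : ℝ × ℝ => Xyt q.1 q.2) (sv, t₀) :=
        hXytcont.continuousAt ((isOpen_univ.prod isOpen_Ioo).mem_nhds ⟨trivial, ht₀⟩)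
      exact houter.tendsto.comp ((continuous_id.prodMk continuous_const).continuousAt)
    -- Xt z t₀ - Xt y1 t₀ = ∫_{y1}^{z} Xyt s t₀, for all z
    have hkey : ∀ z : ℝ, Xt z t₀ - Xt y1 t₀ = ∫ sv in y1..z, Xyt sv t₀ := by
      intro z
      obtain ⟨ε, εpos, hball⟩ := Metric.isOpen_iff.1 isOpen_Ioo t₀ ht₀
      have hKsub : Set.uIcc y1 z ×ˢ Set.Icc (t₀ - ε/2) (t₀ + ε/2)
          ⊆ Set.univ ×ˢ Set.Ioo (0:ℝ) T := by
        rintro ⟨p1, p2⟩ ⟨hp1, hp2⟩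
        refine ⟨trivial, hball ?_⟩
        rw [Metric.mem_ball, Real.dist_eq, abs_lt]
        constructor
        · linarith [hp2.1]
        · linarith [hp2.2]
      obtain ⟨C, hC⟩ := (isCompact_uIcc.prod isCompact_Icc).exists_bound_of_continuousOn
        (hXytcont.mono hKsub)
      have hballsub : Metric.ball t₀ (ε/2) ⊆ Set.Ioo (0:ℝ) T := fun τ hτ =>
        hball (Metric.ball_subset_ball (by linarith) hτ)
      have hDI : HasDerivAt (fun t => ∫ sv in y1..z, Xy sv t)
          (∫ sv in y1..z, Xyt sv t₀) t₀ := by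
        have hres := intervalIntegral.hasDerivAt_integral_of_dominated_loc_of_deriv_le
          (F := fun t sv => Xy sv t) (F' := fun t sv => Xyt sv t)
          (x₀ := t₀) (a := y1) (b := z) (bound := fun _ => C) (μ := volume)
          (Metric.ball_mem_nhds t₀ (half_pos εpos))
          ?meas ?int ?meas' ?bnd ?bndint ?derivs
        · exact hres.2
        case meas =>
          filter_upwards [isOpen_Ioo.eventually_mem ht₀] with t ht
          exact ((hXyC t ht).aestronglyMeasurable).restrict
        case int => exact ((hXyC t₀ ht₀).intervalIntegrable _ _)
        case meas' => exact (hXytC.aestronglyMeasurable).restrict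
        case bnd =>
          refine Filter.Eventually.of_forall fun sv => ?_
          intro hsv τ hτ
          have : ((sv, τ) : ℝ × ℝ) ∈ Set.uIcc y1 z ×ˢ Set.Icc (t₀ - ε/2) (t₀ + ε/2) := by
            refine ⟨Set.uIoc_subset_uIcc hsv, ?_⟩
            have hd := Metric.mem_ball.1 hτ
            rw [Real.dist_eq, abs_lt] at hd
            exact ⟨by linarith [hd.1], by linarith [hd.2]⟩
          exact hC (sv, τ) this
        case bndint => exact intervalIntegrable_const
        case derivs =>
          refine Filter.Eventually.of_forall fun sv => ?_
          intro _ τ hτ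
          exact hXyt sv τ (hballsub hτ)
      have hXz : HasDerivAt (fun t => X z t - X y1 t) (Xt z t₀ - Xt y1 t₀) t₀ :=
        (hXt z t₀ ht₀).sub (hXt y1 t₀ ht₀)
      have hev : (fun t => ∫ sv in y1..z, Xy sv t) =ᶠ[𝓝 t₀]
          (fun t => X z t - X y1 t) := by
        filter_upwards [Ioo_mem_nhds ht₀.1 ht₀.2] with t ht
        rw [intervalIntegral.integral_eq_sub_of_hasDerivAt
          (fun sv _ => hXy sv t ht) ((hXyC t ht).intervalIntegrable _ _)]
      exact (hXz.unique (hDI.congr_of_eventuallyEq hev.symm)).symm ▸ rfl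
    -- two computations of the derivative of z ↦ Xt z t₀ at yv
    have hP1 : HasDerivAt (fun z => Xt z t₀) (Xyt yv t₀) yv := by
      have hfun : (fun z => Xt z t₀)
          = fun z => Xt y1 t₀ + ∫ sv in y1..z, Xyt sv t₀ := by
        funext z
        rw [← hkey z]; ring
      rw [hfun]
      have hint2 : HasDerivAt (fun z => ∫ sv in y1..z, Xyt sv t₀) (Xyt yv t₀) yv :=
        intervalIntegral.integral_hasDerivAt_right
          (hXytC.intervalIntegrable _ _)
          (hXytC.stronglyMeasurableAtFilter _ _) hXytC.continuousAt
      exact ((hasDerivAt_const yv (Xt y1 t₀)).add hint2).congr_deriv (zero_add _)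
    have hP2 : HasDerivAt (fun z => Xt z t₀)
        ((2 * u (X yv t₀) t₀ * ux (X yv t₀) t₀
          - 2 * ux (X yv t₀) t₀ * uxx (X yv t₀) t₀) * Xy yv t₀) yv := by
      have hfun2 : (fun z => Xt z t₀)
          = fun z => (u (X z t₀) t₀)^2 - (ux (X z t₀) t₀)^2 :=
        funext fun z => hXt_eq z t₀ ht₀
      rw [hfun2]
      have hvd : HasDerivAt (fun x => (u x t₀)^2 - (ux x t₀)^2)
          (2 * u (X yv t₀) t₀ * ux (X yv t₀) t₀
            - 2 * ux (X yv t₀) t₀ * uxx (X yv t₀) t₀) (X yv t₀) := by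
        have h1 := ((hux (X yv t₀) t₀ ht₀).pow 2).sub ((huxx (X yv t₀) t₀ ht₀).pow 2)
        refine h1.congr_deriv ?_
        ring
      exact hvd.comp yv (hXy yv t₀ ht₀)
    have hfin2 := hP1.unique hP2
    rw [hfin2, hXy_eq yv t₀ ht₀]
    have hm0 := (hmpos (X yv t₀) t₀ ht₀).ne'
    rw [hm (X yv t₀) t₀]
    have hmX := hmpos (X yv t₀) t₀ ht₀
    rw [hm (X yv t₀) t₀] at hmX hm0
    field_simp
  -- ============================ (iv) ========================================
  have hFX : ∀ yv : ℝ, ∀ t ∈ Set.Ioo (0:ℝ) T,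
      (∫ ξ in Set.Ioi (X yv t), (m ξ t - A2)) = A2 * (X yv t - yv - A2^2 * t) := by
    intro yv t ht
    have h1 := hinv yv t ht
    rw [hy (X yv t) t] at h1
    have hA0 : A2 ≠ 0 := hA.ne'
    field_simp at h1
    linarith
  have hlog : ∀ yv : ℝ, ∀ t ∈ Set.Ioo (0:ℝ) T,
      Real.log (a1 yv t) = -(X yv t - yv - A2^2 * t) / 2 := by
    intro yv t ht
    rw [ha1, Real.log_exp, hFX yv t ht]
    have hA0 : A2 ≠ 0 := hA.ne'
    field_simp
  intro yv t ht
  refine ⟨hXy_eq yv t ht, hXt_eq yv t ht, hXyt_eq yv t ht, ?_, ?_⟩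
  · rw [hlog yv t ht]; ring
  · have hinner : ∀ t' ∈ Set.Ioo (0:ℝ) T,
        deriv (fun y' => Real.log (a1 y' t')) yv = (1 - Xy yv t') / 2 := by
      intro t' ht'
      have hfun : (fun y' => Real.log (a1 y' t'))
          = fun y' => -(X y' t' - y' - A2^2 * t') / 2 :=
        funext fun y' => hlog y' t' ht'
      rw [hfun]
      have hD : HasDerivAt (fun y' => -(X y' t' - y' - A2^2 * t') / 2)
          ((1 - Xy yv t') / 2) yv := by
        have h1 := (((hXy yv t' ht').sub (hasDerivAt_id yv)).sub_const
          (A2^2 * t')).neg.div_const 2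
        refine h1.congr_deriv ?_
        ring
      exact hD.deriv
    have hev : (fun t' => deriv (fun y' => Real.log (a1 y' t')) yv) =ᶠ[𝓝 t]
        (fun t' => (1 - Xy yv t') / 2) := by
      filter_upwards [Ioo_mem_nhds ht.1 ht.2] with t' ht'
      exact hinner t' ht'
    rw [hev.deriv_eq]
    have hD2 : HasDerivAt (fun t' => (1 - Xy yv t') / 2) (-(Xyt yv t) / 2) t := by
      have h1 := ((hasDerivAt_const t (1:ℝ)).sub (hXyt yv t ht)).div_const 2
      refine h1.congr_deriv ?_
      ring
    rw [hD2.deriv, hXyt_eq yv t ht]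
    have hA0 : A2 ≠ 0 := hA.ne'
    field_simp
end

section
/- Let T ∈ (0, ∞] and let u : ℝ × [0,T) → ℝ be such that u, u_x, u_{xx} and m := u − u_{xx} are continuous, and let q : [0,T) × ℝ → ℝ be continuously differentiable with ∂_x q continuous and ∂_t(∂_x q) = ∂_x(∂_t q), satisfying ∂_t q(t,x) = (u² − u_x²)(q(t,x), t) and q(0,x) = x. Then ∂_t(∂_x q)(t,x) = 2·(m·u_x)(q(t,x), t)·∂_x q(t,x), and consequently ∂_x q(t,x) = exp( 2·∫_0^t (m·u_x)(q(s,x), s) ds ) for all (t,x) ∈ [0,T) × ℝ; in particular ∂_x q(t,x) > 0 everywhere. -/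
open MeasureTheory Filter

/-- the Jacobian ∂_x q of the characteristic flow satisfies
∂_t(∂_x q) = 2·(m·u_x)(q,t)·∂_x q, hence
∂_x q(t,x) = exp(2·∫_0^t (m·u_x)(q(s,x),s) ds) > 0. -/
theorem stmt_18 (T : EReal) (hT : 0 < T)
    (u ux uxx m : ℝ → ℝ → ℝ)
    (hucont : Continuous fun p : ℝ × ℝ => u p.1 p.2)
    (huxcont : Continuous fun p : ℝ × ℝ => ux p.1 p.2)
    (huxxcont : Continuous fun p : ℝ × ℝ => uxx p.1 p.2)
    (hmcont : Continuous fun p : ℝ × ℝ => m p.1 p.2)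
    (hux : ∀ x t, HasDerivAt (fun ξ => u ξ t) (ux x t) x)
    (huxx : ∀ x t, HasDerivAt (fun ξ => ux ξ t) (uxx x t) x)
    (hm : ∀ x t, m x t = u x t - uxx x t)
    (q qx : ℝ → ℝ → ℝ)
    (hq0 : ∀ x, q 0 x = x)
    (hqt : ∀ x, ∀ t : ℝ, 0 ≤ t → (t : EReal) < T →
      HasDerivAt (fun t' => q t' x) ((u (q t x) t)^2 - (ux (q t x) t)^2) t)
    (hqx : ∀ t x, HasDerivAt (fun x' => q t x') (qx t x) x)
    (hqxcont : Continuous fun p : ℝ × ℝ => qx p.1 p.2)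
    (hmixed : ∀ x, ∀ t : ℝ, 0 ≤ t → (t : EReal) < T →
      HasDerivAt (fun t' => qx t' x)
        (deriv (fun x' => (u (q t x') t)^2 - (ux (q t x') t)^2) x) t) :
    ∀ x, ∀ t : ℝ, 0 ≤ t → (t : EReal) < T →
      HasDerivAt (fun t' => qx t' x)
        (2 * (m (q t x) t * ux (q t x) t) * qx t x) t ∧
      qx t x = Real.exp (2 * ∫ s in (0:ℝ)..t, m (q s x) s * ux (q s x) s) ∧
      0 < qx t x := by
  intro x t ht htT
  -- Part 1 at any admissible time s
  have key : ∀ s : ℝ, 0 ≤ s → (s : EReal) < T →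
      HasDerivAt (fun t' => qx t' x)
        (2 * (m (q s x) s * ux (q s x) s) * qx s x) s := by
    intro s hs hsT
    have A : HasDerivAt (fun x' => u (q s x') s) (ux (q s x) s * qx s x) x :=
      (hux (q s x) s).comp x (hqx s x)
    have B : HasDerivAt (fun x' => ux (q s x') s) (uxx (q s x) s * qx s x) x :=
      (huxx (q s x) s).comp x (hqx s x)
    have D : HasDerivAt (fun x' => (u (q s x') s)^2 - (ux (q s x') s)^2)
        (2 * u (q s x) s ^ 1 * (ux (q s x) s * qx s x)
          - 2 * ux (q s x) s ^ 1 * (uxx (q s x) s * qx s x)) x := by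
      simpa using (A.fun_pow 2).fun_sub (B.fun_pow 2)
    have hd := hmixed x s hs hsT
    rw [D.deriv] at hd
    have heq : 2 * u (q s x) s ^ 1 * (ux (q s x) s * qx s x)
          - 2 * ux (q s x) s ^ 1 * (uxx (q s x) s * qx s x)
        = 2 * (m (q s x) s * ux (q s x) s) * qx s x := by
      rw [hm]; ring
    rwa [heq] at hd
  -- pick t₁ with t < t₁ and (t₁ : EReal) < T
  obtain ⟨t₁, ht₁, ht₁T⟩ := EReal.exists_between_coe_real htT
  have h0t₁ : (0:ℝ) ≤ t₁ := le_of_lt (lt_of_le_of_lt ht (by exact_mod_cast ht₁))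
  have htt₁ : t ≤ t₁ := le_of_lt (by exact_mod_cast ht₁)
  -- clamp to [0, t₁]
  set proj : ℝ → ℝ := fun s => min (max s 0) t₁ with hproj
  have hprojmem : ∀ s, 0 ≤ proj s ∧ (proj s : EReal) < T := by
    intro s
    constructor
    · exact le_min (le_max_right _ _) h0t₁
    · exact lt_of_le_of_lt (by exact_mod_cast min_le_right (max s 0) t₁) ht₁T
  have hprojeq : ∀ s, 0 ≤ s → s ≤ t → proj s = s := by
    intro s h1 h2
    simp [hproj, max_eq_left h1, min_eq_left (h2.trans htt₁)]
  have hprojcont : Continuous proj := (continuous_id.max continuous_const).min continuous_const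
  -- the clamped integrand
  set φ : ℝ → ℝ := fun s => m (q (proj s) x) (proj s) * ux (q (proj s) x) (proj s) with hφ
  have hqcont : ∀ s : ℝ, 0 ≤ s → (s : EReal) < T → ContinuousAt (fun r => q r x) s := by
    intro s hs hsT
    exact (hqt x s hs hsT).continuousAt
  have hφcont : Continuous φ := by
    rw [continuous_iff_continuousAt]
    intro s
    have h1 : ContinuousAt (fun r => q r x) (proj s) :=
      hqcont _ (hprojmem s).1 (hprojmem s).2
    have h2 : ContinuousAt proj s := hprojcont.continuousAt
    have h3 : ContinuousAt (fun r => q (proj r) x) s := h1.comp h2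
    exact ((hmcont.continuousAt.comp (h3.prodMk h2)).mul
      (huxcont.continuousAt.comp (h3.prodMk h2)))
  -- the integral of φ
  set E : ℝ → ℝ := fun s => ∫ r in (0:ℝ)..s, φ r with hE
  have hEderiv : ∀ s : ℝ, HasDerivAt E (φ s) s := by
    intro s
    exact intervalIntegral.integral_hasDerivAt_right
      (hφcont.intervalIntegrable 0 s)
      (hφcont.stronglyMeasurableAtFilter _ _)
      hφcont.continuousAt
  -- the auxiliary function
  set h : ℝ → ℝ := fun s => qx s x * Real.exp (-(2 * E s)) with hh
  have hhderiv : ∀ s ∈ Set.Icc (0:ℝ) t, HasDerivAt h 0 s := by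
    intro s hs
    have hs0 : (0:ℝ) ≤ s := hs.1
    have hsT : (s : EReal) < T :=
      lt_of_le_of_lt (by exact_mod_cast hs.2) htT
    have h1 := key s hs0 hsT
    have h2 : HasDerivAt (fun r => Real.exp (-(2 * E r)))
        (Real.exp (-(2 * E s)) * (-(2 * φ s))) s := by
      have := (((hEderiv s).const_mul 2).neg).exp
      simpa [mul_comm] using this
    have h3 := h1.mul h2
    have hφs : φ s = m (q s x) s * ux (q s x) s := by
      rw [hφ]; simp only []
      rw [hprojeq s hs.1 hs.2]
    have : (2 * (m (q s x) s * ux (q s x) s) * qx s x) * Real.exp (-(2 * E s))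
        + qx s x * (Real.exp (-(2 * E s)) * (-(2 * φ s))) = 0 := by
      rw [hφs]; ring
    rw [this] at h3
    exact h3
  have hhcont : ContinuousOn h (Set.Icc 0 t) := fun s hs =>
    ((hhderiv s hs).continuousAt).continuousWithinAt
  have hconst := constant_of_has_deriv_right_zero hhcont
    (fun s hs => ((hhderiv s ⟨hs.1, le_of_lt hs.2⟩).hasDerivWithinAt))
  have hqx01 : qx 0 x = 1 := by
    have h1 : HasDerivAt (fun x' => q 0 x') 1 x := by
      have : (fun x' => q 0 x') = id := funext hq0
      rw [this]; exact hasDerivAt_id x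
    exact (hqx 0 x).unique h1
  have hh0 : h 0 = 1 := by
    simp [hh, hE, hqx01]
  have hht : h t = 1 := by
    rw [← hh0]
    exact hconst t ⟨ht, le_refl t⟩
  have hEt : E t = ∫ s in (0:ℝ)..t, m (q s x) s * ux (q s x) s := by
    apply intervalIntegral.integral_congr
    intro r hr
    rw [Set.uIcc_of_le ht] at hr
    rw [hφ]; simp only []
    rw [hprojeq r hr.1 hr.2]
  have hqxt : qx t x = Real.exp (2 * ∫ s in (0:ℝ)..t, m (q s x) s * ux (q s x) s) := by
    have := hht
    rw [hh] at this
    simp only [] at this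
    have h2 : qx t x = Real.exp (2 * E t) := by
      have h3 := congrArg (fun y => y * Real.exp (2 * E t)) this
      simp only [one_mul, mul_assoc, ← Real.exp_add] at h3
      simpa using h3
    rw [h2, hEt]
  refine ⟨key t ht htT, hqxt, ?_⟩
  rw [hqxt]; exact Real.exp_pos _
end
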